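/- Let S_i(x) = A_i x + t_i, i = 1,…,m, be invertible affine contractions of ℝ^d, with T_i = S_i^{-1}. For a finite word i = (i_1,…,i_n), write T_i = T_{i_1} ∘ ⋯ ∘ T_{i_n} and A_ī for the product A_{i_n} ⋯ A_{i_1}. Then for any Borel set E ⊂ ℝ^d and any x ∈ ℝ^d: T_i(x) − x ∈ E if and only if x ∈ π(ī^∞) + ∑_{k=1}^∞ A_ī^k (E), where π(ī^∞) is the fixed point of the contraction S_{i_n} ∘ ⋯ ∘ S_{i_1}. -/

import Mathlib

section Aux

variable {d : ℕ} {ι : Type*}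
variable (A : ι → (EuclideanSpace ℝ (Fin d) ≃L[ℝ] EuclideanSpace ℝ (Fin d)))
variable (t : ι → EuclideanSpace ℝ (Fin d))

/-- affine fold difference equals the linear product applied to the difference -/
lemma aux_sub (l : List ι) (x y : EuclideanSpace ℝ (Fin d)) :
    (l.foldr (fun i g => (fun x => A i x + t i) ∘ g) id) x
      - (l.foldr (fun i g => (fun x => A i x + t i) ∘ g) id) y
    = ((l.map (fun i => (A i : EuclideanSpace ℝ (Fin d) →L[ℝ] EuclideanSpace ℝ (Fin d)))).prod)
        (x - y) := by
  induction l with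
  | nil => simp
  | cons i l ih =>
      simp only [List.foldr_cons, Function.comp_apply, List.map_cons, List.prod_cons,
        ContinuousLinearMap.mul_apply]
      rw [add_sub_add_right_eq_sub, ← map_sub, ih]
      rfl

lemma aux_foldr_base (l : List ι) (b : EuclideanSpace ℝ (Fin d) → EuclideanSpace ℝ (Fin d)) :
    l.foldr (fun i g => (fun x => A i x + t i) ∘ g) b
      = (l.foldr (fun i g => (fun x => A i x + t i) ∘ g) id) ∘ b := by
  induction l with
  | nil => rfl
  | cons i l ih => simp [List.foldr_cons, ih]; rfl

lemma aux_inv (l : List ι) (x : EuclideanSpace ℝ (Fin d)) :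
    (l.reverse.foldr (fun i g => (fun x => A i x + t i) ∘ g) id)
      ((l.foldr (fun i g => (fun y => (A i).symm (y - t i)) ∘ g) id) x) = x := by
  induction l generalizing x with
  | nil => rfl
  | cons i l ih =>
      simp only [List.reverse_cons, List.foldr_append, List.foldr_cons, List.foldr_nil,
        Function.comp_apply]
      rw [aux_foldr_base]
      simp only [Function.comp_apply, Function.comp, id]
      rw [show (A i) ((A i).symm _) + t i = (l.foldr (fun i g => (fun y => (A i).symm (y - t i)) ∘ g) id) x by
        rw [ContinuousLinearEquiv.apply_symm_apply]; abel]
      exact ih x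

lemma aux_inj (l : List ι) :
    Function.Injective
      ((l.map (fun i => (A i : EuclideanSpace ℝ (Fin d) →L[ℝ] EuclideanSpace ℝ (Fin d)))).prod) := by
  induction l with
  | nil => simpa using Function.injective_id
  | cons i l ih =>
      simp only [List.map_cons, List.prod_cons]
      intro a b hab
      simp only [ContinuousLinearMap.mul_apply] at hab
      exact ih ((A i).injective hab)

lemma aux_norm (hA : ∀ i, ‖(A i : EuclideanSpace ℝ (Fin d) →L[ℝ] EuclideanSpace ℝ (Fin d))‖ < 1)
    (l : List ι) (hl : l ≠ []) :
    ‖(l.map (fun i => (A i : EuclideanSpace ℝ (Fin d) →L[ℝ] EuclideanSpace ℝ (Fin d)))).prod‖ < 1 := by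
  induction l with
  | nil => exact absurd rfl hl
  | cons i l ih =>
      rcases eq_or_ne l [] with rfl | hne
      · simp only [List.map_cons, List.map_nil, List.prod_cons, List.prod_nil, mul_one]
        exact hA i
      · have h1 := ih hne
        simp only [List.map_cons, List.prod_cons]
        calc ‖_ * _‖ ≤ ‖(A i : EuclideanSpace ℝ (Fin d) →L[ℝ] EuclideanSpace ℝ (Fin d))‖ * _ :=
              norm_mul_le _ _
          _ < 1 := by nlinarith [norm_nonneg (A i : EuclideanSpace ℝ (Fin d) →L[ℝ] EuclideanSpace ℝ (Fin d)), norm_nonneg ((l.map (fun i => (A i : EuclideanSpace ℝ (Fin d) →L[ℝ] EuclideanSpace ℝ (Fin d)))).prod), hA i]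

end Aux

/-- `T_i(x) - x ∈ E` iff `x ∈ π(ī^∞) + ∑_{k=1}^∞ A_ī^k (E)`. -/
theorem stmt_5 {d : ℕ} {ι : Type*}
    (A : ι → (EuclideanSpace ℝ (Fin d) ≃L[ℝ] EuclideanSpace ℝ (Fin d)))
    (t : ι → EuclideanSpace ℝ (Fin d))
    (hA : ∀ i, ‖(A i : EuclideanSpace ℝ (Fin d) →L[ℝ] EuclideanSpace ℝ (Fin d))‖ < 1)
    (w : List ι) (hw : w ≠ [])
    (π : EuclideanSpace ℝ (Fin d))
    -- `π` is the fixed point of `S_{i_n} ∘ ⋯ ∘ S_{i_1}`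
    (hπ : (w.reverse.foldr (fun i g => (fun x => A i x + t i) ∘ g) id) π = π)
    (E : Set (EuclideanSpace ℝ (Fin d))) (x : EuclideanSpace ℝ (Fin d)) :
    -- `T_{i_1} ∘ ⋯ ∘ T_{i_n} (x) - x ∈ E` ...
    (w.foldr (fun i g => (fun y => (A i).symm (y - t i)) ∘ g) id) x - x ∈ E ↔
      -- ... iff `x ∈ π + (∑_{k=1}^∞ A_ī^k)(E)` with `A_ī = A_{i_n} ⋯ A_{i_1}`
      x ∈ (fun v => π + ∑' k : ℕ,
        (((w.reverse.map
            (fun i => (A i : EuclideanSpace ℝ (Fin d) →L[ℝ] EuclideanSpace ℝ (Fin d)))).prod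
          ^ (k + 1)) v)) '' E := by
  set B := (w.reverse.map
      (fun i => (A i : EuclideanSpace ℝ (Fin d) →L[ℝ] EuclideanSpace ℝ (Fin d)))).prod with hB
  have hBnorm : ‖B‖ < 1 := aux_norm A hA w.reverse (by simpa using hw)
  have hBinj : Function.Injective B := aux_inj A w.reverse
  -- summability
  have hsum : ∀ v : EuclideanSpace ℝ (Fin d), Summable (fun k : ℕ => (B ^ (k + 1)) v) := by
    intro v
    apply Summable.of_norm_bounded (g := fun k : ℕ => ‖B‖ ^ (k + 1) * ‖v‖)
    · exact (((summable_geometric_of_lt_one (norm_nonneg _) hBnorm).mul_left ‖B‖).mul_right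
        ‖v‖).congr (fun k => by ring)
    · intro k
      calc ‖(B ^ (k + 1)) v‖ ≤ ‖B ^ (k + 1)‖ * ‖v‖ := (B ^ (k + 1)).le_opNorm v
        _ ≤ ‖B‖ ^ (k + 1) * ‖v‖ := by
            gcongr
            exact norm_pow_le' B (Nat.succ_pos k)
  set f : EuclideanSpace ℝ (Fin d) → EuclideanSpace ℝ (Fin d) :=
    fun v => ∑' k : ℕ, (B ^ (k + 1)) v with hf
  -- key geometric-series identity
  have hkey : ∀ v, f v - B (f v) = B v := by
    intro v
    have h1 : B (f v) = ∑' k : ℕ, (B ^ (k + 2)) v := by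
      rw [hf]
      rw [B.map_tsum (hsum v)]
      congr 1
      funext k
      rw [show B ^ (k + 2) = B * B ^ (k + 1) by rw [← pow_succ']]
      rfl
    have h2 : f v = B v + ∑' k : ℕ, (B ^ (k + 2)) v := by
      have := Summable.tsum_eq_zero_add (hsum v)
      simpa [pow_one, hf] using this
    rw [h1, h2]
    abel
  -- injectivity of 1 - B
  have honeB : Function.Injective (fun z : EuclideanSpace ℝ (Fin d) => z - B z) := by
    intro a b hab
    have h3 : a - b = B (a - b) := by
      simp only at hab
      rw [map_sub]
      have : a - B a = b - B b := hab
      abel_nf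
      abel_nf at this
      linear_combination (norm := module) this
    by_contra hne
    have h4 : ‖a - b‖ ≤ ‖B‖ * ‖a - b‖ := by
      conv_lhs => rw [h3]
      exact B.le_opNorm _
    have h5 : 0 < ‖a - b‖ := norm_pos_iff.mpr (sub_ne_zero.mpr hne)
    nlinarith
  -- basic identity
  set y := (w.foldr (fun i g => (fun y => (A i).symm (y - t i)) ∘ g) id) x with hy
  have hxy : (w.reverse.foldr (fun i g => (fun x => A i x + t i) ∘ g) id) y = x := aux_inv A t w x
  have hmain : (x - π) - B (x - π) = B (y - x) := by
    have h6 : x - π = B (y - π) := by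
      conv_lhs => rw [← hxy, ← hπ]
      exact aux_sub A t w.reverse y π
    have h7 : B (y - π) = B (y - x) + B (x - π) := by
      rw [← map_add]; congr 1; abel
    rw [sub_eq_iff_eq_add]
    exact h6.trans h7
  constructor
  · intro he
    refine ⟨y - x, he, ?_⟩
    have h10 : f (y - x) = x - π := by
      apply honeB
      simp only
      rw [hkey, hmain]
    show π + f (y - x) = x
    rw [h10]; abel
  · rintro ⟨v, hv, hxv⟩
    have h8 : f v = x - π := by
      rw [← hxv]
      show f v = π + f v - π
      abel
    have h9 : B v = B (y - x) := by
      rw [← hkey v, h8, hmain]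
    rwa [← hBinj h9]
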